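/- If the unfolding f^k(x_{≤k}, x_{>k}) of a multivariate function f has an exact separated decomposition of rank r_k for each k = 1,...,d−1, i.e., f^k = ∑_{j=1}^{r_k} a_j^{(k)}(x_{≤k}) b_j^{(k)}(x_{>k}), then f admits an exact function-train decomposition with ranks bounded by (1, r₁, r₂, ..., r_{d−1}, 1). -/
import Mathlib


/-- Partial left-to-right product of function-train cores with general
coordinate spaces `X k`. -/
def ftProdD (X : ℕ → Type) (r : ℕ → ℕ)
    (F : ∀ k : ℕ, X k → Matrix (Fin (r k)) (Fin (r (k + 1))) ℝ)
    (x : ∀ k, X k) : (n : ℕ) → Matrix (Fin (r 0)) (Fin (r n)) ℝ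
  | 0 => 1
  | n + 1 => ftProdD X r F x n * F n (x n)

open Module

namespace FTaux

variable {X : ℕ → Type}

/-- take first `k` coordinates from `y`, rest from `x`. -/
def combine (k : ℕ) (y x : ∀ i, X i) : ∀ i, X i := fun i => if i < k then y i else x i

/-- slice of `f` at cut `k` with left part `y`. -/
def Sl (f : (∀ i, X i) → ℝ) (k : ℕ) (y : ∀ i, X i) : (∀ i, X i) → ℝ :=
  fun x => f (combine k y x)

/-- span of the slices at cut `k`. -/
def Wk (f : (∀ i, X i) → ℝ) (k : ℕ) : Submodule ℝ ((∀ i, X i) → ℝ) :=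
  Submodule.span ℝ (Set.range (Sl f k))

/-- "fix coordinate `k` to `xk`" as a linear map on functions. -/
def Tk (k : ℕ) (xk : X k) : ((∀ i, X i) → ℝ) →ₗ[ℝ] ((∀ i, X i) → ℝ) where
  toFun g := fun x => g (Function.update x k xk)
  map_add' _ _ := rfl
  map_smul' _ _ := rfl

lemma Sl_zero (f : (∀ i, X i) → ℝ) (y : ∀ i, X i) : Sl f 0 y = f := by
  funext x
  show f (combine 0 y x) = f x
  have hc : combine 0 y x = x := by
    funext i
    simp [combine]
  rw [hc]

lemma Sl_mem (f : (∀ i, X i) → ℝ) (k : ℕ) (y : ∀ i, X i) : Sl f k y ∈ Wk f k :=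
  Submodule.subset_span ⟨y, rfl⟩

lemma Tk_Sl (f : (∀ i, X i) → ℝ) (k : ℕ) (xk : X k) (y : ∀ i, X i) :
    Tk k xk (Sl f k y) = Sl f (k+1) (Function.update y k xk) := by
  funext x
  show f (combine k y (Function.update x k xk)) = f (combine (k+1) (Function.update y k xk) x)
  congr 1
  funext i
  rcases lt_trichotomy i k with h | h | h
  · simp [combine, h, Function.update_apply, Nat.lt_succ_of_lt h, h.ne]
  · subst h
    simp [combine, Function.update_apply]
  · have h1 : ¬ i < k := by omega
    have h2 : ¬ i < k + 1 := by omega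
    have h3 : i ≠ k := by omega
    simp [combine, Function.update_apply, h1, h2, h3]

lemma Tk_Sl_self (f : (∀ i, X i) → ℝ) (k : ℕ) (x : ∀ i, X i) :
    Tk k (x k) (Sl f k x) = Sl f (k+1) x := by
  rw [Tk_Sl, Function.update_eq_self]

lemma Tk_mem (f : (∀ i, X i) → ℝ) (k : ℕ) (xk : X k) {g} (hg : g ∈ Wk f k) :
    Tk k xk g ∈ Wk f (k+1) := by
  have hle : Wk f k ≤ (Wk f (k+1)).comap (Tk k xk) := by
    rw [Wk, Submodule.span_le]
    rintro _ ⟨y, rfl⟩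
    simpa [Submodule.mem_comap, Tk_Sl] using Sl_mem f (k+1) (Function.update y k xk)
  exact hle hg

open Classical in
/-- `j`-th coordinate w.r.t. a chosen basis of `Wk f k` (junk values outside). -/
noncomputable def gma (f : (∀ i, X i) → ℝ) (k j : ℕ) (g : (∀ i, X i) → ℝ) : ℝ :=
  if h : FiniteDimensional ℝ (Wk f k) then
    letI := h
    if hj : j < finrank ℝ (Wk f k) then
      if hg : g ∈ Wk f k then (finBasis ℝ (Wk f k)).repr ⟨g, hg⟩ ⟨j, hj⟩ else 0
    else 0
  else 0

open Classical in
/-- `i`-th vector of the chosen basis of `Wk f k` (junk values outside). -/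
noncomputable def vk (f : (∀ i, X i) → ℝ) (k i : ℕ) : (∀ i, X i) → ℝ :=
  if h : FiniteDimensional ℝ (Wk f k) then
    letI := h
    if hi : i < finrank ℝ (Wk f k) then ((finBasis ℝ (Wk f k)) ⟨i, hi⟩ : _) else 0
  else 0

lemma vk_mem (f : (∀ i, X i) → ℝ) (k i : ℕ) : vk f k i ∈ Wk f k := by
  unfold vk
  by_cases h : FiniteDimensional ℝ (Wk f k)
  · rw [dif_pos h]
    by_cases hi : i < finrank ℝ (Wk f k)
    · rw [dif_pos hi]; exact Subtype.coe_prop _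
    · rw [dif_neg hi]; exact (Wk f k).zero_mem
  · rw [dif_neg h]; exact (Wk f k).zero_mem

lemma gma_repr_sum (f : (∀ i, X i) → ℝ) (k : ℕ) [h : FiniteDimensional ℝ (Wk f k)]
    {g} (hg : g ∈ Wk f k) :
    ∑ l ∈ Finset.range (finrank ℝ (Wk f k)), gma f k l g • vk f k l = g := by
  rw [← Fin.sum_univ_eq_sum_range (fun l => gma f k l g • vk f k l)]
  have hb := congrArg (Subtype.val : Wk f k → _) ((finBasis ℝ (Wk f k)).sum_repr ⟨g, hg⟩)
  simp only [AddSubmonoidClass.coe_finset_sum, SetLike.val_smul, Submodule.coe_smul] at hb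
  calc ∑ l : Fin (finrank ℝ (Wk f k)), gma f k (l : ℕ) g • vk f k (l : ℕ)
      = ∑ l : Fin (finrank ℝ (Wk f k)),
          ((finBasis ℝ (Wk f k)).repr ⟨g, hg⟩) l • ((finBasis ℝ (Wk f k)) l : (∀ i, X i) → ℝ) := by
        refine Finset.sum_congr rfl fun l _ => ?_
        have hl : (l : ℕ) < finrank ℝ (Wk f k) := l.isLt
        unfold gma vk
        rw [dif_pos h, dif_pos h, dif_pos hl, dif_pos hg, dif_pos hl]
    _ = g := hb

lemma gma_sum (f : (∀ i, X i) → ℝ) (k : ℕ) [h : FiniteDimensional ℝ (Wk f k)]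
    (m j : ℕ) (a : ℕ → ℝ) (g : ℕ → (∀ i, X i) → ℝ) (hg : ∀ l, g l ∈ Wk f k) :
    gma f k j (∑ l ∈ Finset.range m, a l • g l) = ∑ l ∈ Finset.range m, a l * gma f k j (g l) := by
  by_cases hj : j < finrank ℝ (Wk f k)
  · have hsmem : (∑ l ∈ Finset.range m, a l • g l) ∈ Wk f k :=
      Submodule.sum_mem _ fun l _ => Submodule.smul_mem _ _ (hg l)
    have key : ∀ g' (hg' : g' ∈ Wk f k),
        gma f k j g' = (finBasis ℝ (Wk f k)).coord ⟨j, hj⟩ ⟨g', hg'⟩ := by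
      intro g' hg'
      unfold gma
      rw [dif_pos h, dif_pos hj, dif_pos hg', Basis.coord_apply]
    rw [key _ hsmem]
    have hsub : (⟨∑ l ∈ Finset.range m, a l • g l, hsmem⟩ : Wk f k) =
        ∑ l ∈ Finset.range m, a l • (⟨g l, hg l⟩ : Wk f k) := by
      apply Subtype.ext
      push_cast
      rfl
    rw [hsub, map_sum]
    refine Finset.sum_congr rfl fun l _ => ?_
    rw [map_smul, smul_eq_mul, key _ (hg l)]
  · have z1 : gma f k j (∑ l ∈ Finset.range m, a l • g l) = 0 := by
      rw [gma, dif_pos h, dif_neg hj]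
    have z2 : ∀ l, gma f k j (g l) = 0 := fun l => by rw [gma, dif_pos h, dif_neg hj]
    simp [z1, z2]

end FTaux

namespace FTaux2
open FTaux

variable {X : ℕ → Type}

/-- the rank profile. -/
noncomputable def rr (f : (∀ i, X i) → ℝ) (d k : ℕ) : ℕ :=
  if k = 0 ∨ d ≤ k then 1 else finrank ℝ (Wk f k)

/-- the frame vectors at level `k`. -/
noncomputable def uu (f : (∀ i, X i) → ℝ) (k i : ℕ) : (∀ i, X i) → ℝ :=
  if k = 0 then f else vk f k i

/-- the coordinate functionals at level `k`. -/
noncomputable def CC (f : (∀ i, X i) → ℝ) (d : ℕ) (z : ∀ i, X i) (k j : ℕ)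
    (g : (∀ i, X i) → ℝ) : ℝ :=
  if d ≤ k then g z else gma f k j g

/-- the cores. -/
noncomputable def FF (f : (∀ i, X i) → ℝ) (d : ℕ) (z : ∀ i, X i) (k : ℕ) (xk : X k) :
    Matrix (Fin (rr f d k)) (Fin (rr f d (k+1))) ℝ :=
  Matrix.of fun i j => CC f d z (k+1) (j : ℕ) (Tk k xk (uu f k (i : ℕ)))

/-- coordinates of the slice `Sl f n x`. -/
noncomputable def cc (f : (∀ i, X i) → ℝ) (d : ℕ) (z : ∀ i, X i) (n : ℕ)
    (x : ∀ i, X i) (j : ℕ) : ℝ :=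
  if n = 0 then 1 else CC f d z n j (Sl f n x)

lemma uu_mem (f : (∀ i, X i) → ℝ) (z : ∀ i, X i) (k i : ℕ) : uu f k i ∈ Wk f k := by
  unfold uu
  by_cases hk : k = 0
  · rw [if_pos hk, hk, ← Sl_zero f z]
    exact Sl_mem f 0 z
  · rw [if_neg hk]
    exact vk_mem f k i

lemma rep (f : (∀ i, X i) → ℝ) (d : ℕ) (z : ∀ i, X i)
    (hFD : ∀ k, 0 < k → k < d → FiniteDimensional ℝ (Wk f k))
    (n : ℕ) (hn : n < d) (x : ∀ i, X i) :
    ∑ l ∈ Finset.range (rr f d n), cc f d z n x l • uu f n l = Sl f n x := by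
  rcases Nat.eq_zero_or_pos n with hn0 | hn0
  · subst hn0
    have h1 : rr f d 0 = 1 := if_pos (Or.inl rfl)
    rw [h1, Finset.sum_range_one]
    show (if (0:ℕ) = 0 then (1:ℝ) else _) • (if (0:ℕ) = 0 then f else _) = Sl f 0 x
    rw [if_pos rfl, if_pos rfl, one_smul, Sl_zero]
  · have hcond : ¬ (n = 0 ∨ d ≤ n) := by push_neg; exact ⟨hn0.ne', hn⟩
    have h1 : rr f d n = finrank ℝ (Wk f n) := if_neg hcond
    haveI := hFD n hn0 hn
    rw [h1]
    have hterm : ∀ l : ℕ, cc f d z n x l • uu f n l = gma f n l (Sl f n x) • vk f n l := by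
      intro l
      unfold cc uu CC
      rw [if_neg hn0.ne', if_neg hn0.ne', if_neg (not_le.mpr hn)]
    rw [Finset.sum_congr rfl fun l _ => hterm l]
    exact gma_repr_sum f n (Sl_mem f n x)

lemma step (f : (∀ i, X i) → ℝ) (d : ℕ) (z : ∀ i, X i)
    (hFD : ∀ k, 0 < k → k < d → FiniteDimensional ℝ (Wk f k))
    (x : ∀ i, X i) (n : ℕ) (hn : n < d) (j : ℕ) :
    ∑ l ∈ Finset.range (rr f d n),
        cc f d z n x l * CC f d z (n+1) j (Tk n (x n) (uu f n l)) = cc f d z (n+1) x j := by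
  have hrep := rep f d z hFD n hn x
  have hTmem : ∀ l : ℕ, Tk n (x n) (uu f n l) ∈ Wk f (n+1) :=
    fun l => Tk_mem f n (x n) (uu_mem f z n l)
  have hS : Sl f (n+1) x = ∑ l ∈ Finset.range (rr f d n),
      cc f d z n x l • Tk n (x n) (uu f n l) := by
    rw [← Tk_Sl_self f n x, ← hrep, map_sum]
    simp only [map_smul]
  have hcc : cc f d z (n+1) x j = CC f d z (n+1) j (Sl f (n+1) x) :=
    if_neg (Nat.succ_ne_zero n)
  rw [hcc, hS]
  by_cases hdn : d ≤ n + 1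
  · unfold CC
    rw [if_pos hdn]
    rw [Finset.sum_congr rfl fun l _ => by rw [if_pos hdn]]
    simp [Finset.sum_apply]
  · haveI := hFD (n+1) (Nat.succ_pos n) (not_le.mp hdn)
    unfold CC
    rw [if_neg hdn]
    rw [Finset.sum_congr rfl fun l _ => by rw [if_neg hdn]]
    exact (gma_sum f (n+1) _ j _ _ hTmem).symm

end FTaux2

open FTaux FTaux2 Module

/-- If every unfolding `f^k` of `f` (as a function of the first `k`
coordinates versus the rest) has an exact separated decomposition of rank
`r k`, then `f` admits an exact function-train decomposition with ranks
bounded by `(1, r₁, …, r_{d−1}, 1)`. -/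
theorem ft_exists_of_unfolding_ranks (d : ℕ) (hd : 1 ≤ d)
    (X : ℕ → Type) (f : (∀ k, X k) → ℝ) (r : ℕ → ℕ)
    (hunf : ∀ k, 0 < k → k < d →
      ∃ (a : Fin (r k) → (∀ i, X i) → ℝ) (b : Fin (r k) → (∀ i, X i) → ℝ),
        (∀ j x y, (∀ i, i < k → x i = y i) → a j x = a j y) ∧
        (∀ j x y, (∀ i, k ≤ i → x i = y i) → b j x = b j y) ∧
        (∀ x, f x = ∑ j, a j x * b j x))
    (hdep : ∀ x y, (∀ i, i < d → x i = y i) → f x = f y) :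
    ∃ (r' : ℕ → ℕ) (F : ∀ k : ℕ, X k → Matrix (Fin (r' k)) (Fin (r' (k + 1))) ℝ),
      r' 0 = 1 ∧ r' d = 1 ∧
      (∀ k, 0 < k → k < d → r' k ≤ r k) ∧
      (∀ (x : ∀ k, X k) (i : Fin (r' 0)) (j : Fin (r' d)),
        ftProdD X r' F x d i j = f x) := by
  classical
  by_cases hne : Nonempty (∀ i, X i)
  case neg =>
    refine ⟨fun k => if k = 0 ∨ d ≤ k then 1 else 0, fun k xk => 0,
      if_pos (Or.inl rfl), if_pos (Or.inr le_rfl), fun k h1 h2 => ?_, fun x => absurd ⟨x⟩ hne⟩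
    show (if k = 0 ∨ d ≤ k then 1 else 0) ≤ r k
    rw [if_neg (by omega : ¬ (k = 0 ∨ d ≤ k))]
    exact Nat.zero_le _
  case pos =>
  obtain ⟨z⟩ := hne
  -- finite-dimensionality and rank bounds for the slice spans
  have hbig : ∀ k, 0 < k → k < d →
      FiniteDimensional ℝ (Wk f k) ∧ finrank ℝ (Wk f k) ≤ r k := by
    intro k hk0 hkd
    obtain ⟨a, b, ha, hb, hf⟩ := hunf k hk0 hkd
    have hWle : Wk f k ≤ Submodule.span ℝ (Set.range b) := by
      rw [Wk, Submodule.span_le]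
      rintro _ ⟨y, rfl⟩
      have hSrep : Sl f k y = ∑ j : Fin (r k), a j (combine k y z) • b j := by
        funext x
        have h1 : Sl f k y x = ∑ j : Fin (r k), a j (combine k y x) * b j (combine k y x) :=
          hf (combine k y x)
        rw [h1, Finset.sum_apply]
        refine Finset.sum_congr rfl fun j _ => ?_
        have ha' : a j (combine k y x) = a j (combine k y z) := by
          refine ha j _ _ fun i hi => ?_
          simp [combine, hi]
        have hb' : b j (combine k y x) = b j x := by
          refine hb j _ _ fun i hi => ?_
          simp [combine, not_lt.mpr hi]
        rw [ha', hb', Pi.smul_apply, smul_eq_mul]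
      rw [hSrep]
      exact Submodule.sum_mem _ fun j _ =>
        Submodule.smul_mem _ _ (Submodule.subset_span ⟨j, rfl⟩)
    haveI hfd : FiniteDimensional ℝ (Submodule.span ℝ (Set.range b)) :=
      FiniteDimensional.span_of_finite ℝ (Set.finite_range b)
    refine ⟨Submodule.finiteDimensional_of_le hWle, ?_⟩
    calc finrank ℝ (Wk f k) ≤ finrank ℝ (Submodule.span ℝ (Set.range b)) :=
          Submodule.finrank_mono hWle
      _ ≤ Fintype.card (Fin (r k)) := finrank_range_le_card b
      _ = r k := Fintype.card_fin _
  have hFD : ∀ k, 0 < k → k < d → FiniteDimensional ℝ (Wk f k) := fun k h1 h2 => (hbig k h1 h2).1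
  refine ⟨rr f d, FF f d z, if_pos (Or.inl rfl), if_pos (Or.inr le_rfl), ?_, ?_⟩
  · intro k h1 h2
    have : rr f d k = finrank ℝ (Wk f k) := if_neg (by push_neg; exact ⟨h1.ne', h2⟩)
    rw [this]
    exact (hbig k h1 h2).2
  · intro x i j
    have hr0 : rr f d 0 = 1 := if_pos (Or.inl rfl)
    have inv : ∀ n, n ≤ d → ∀ (j : Fin (rr f d n)),
        ftProdD X (rr f d) (FF f d z) x n i j = cc f d z n x (j : ℕ) := by
      intro n
      induction n with
      | zero =>
        intro _ j
        have hij : i = j := by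
          have hi := i.isLt
          have hj := j.isLt
          exact Fin.ext (by omega)
        show (1 : Matrix (Fin (rr f d 0)) (Fin (rr f d 0)) ℝ) i j = _
        rw [hij, Matrix.one_apply_eq]
        unfold cc
        rw [if_pos rfl]
      | succ n ih =>
        intro hn j
        have hnd : n < d := by omega
        show (ftProdD X (rr f d) (FF f d z) x n * FF f d z n (x n)) i j = _
        rw [Matrix.mul_apply]
        have hterm : ∀ l : Fin (rr f d n),
            ftProdD X (rr f d) (FF f d z) x n i l * FF f d z n (x n) l j =
            cc f d z n x (l : ℕ) * CC f d z (n+1) (j : ℕ) (Tk n (x n) (uu f n (l : ℕ))) := by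
          intro l
          rw [ih (by omega) l]
          rfl
        rw [Finset.sum_congr rfl fun l _ => hterm l]
        rw [Fin.sum_univ_eq_sum_range
          (fun l => cc f d z n x l * CC f d z (n+1) (j : ℕ) (Tk n (x n) (uu f n l)))]
        exact step f d z hFD x n hnd (j : ℕ)
    rw [inv d le_rfl j]
    have hccd : cc f d z d x (j : ℕ) = Sl f d x z := by
      unfold cc CC
      rw [if_neg (by omega : ¬ d = 0), if_pos le_rfl]
    rw [hccd]
    refine hdep _ _ fun i hi => ?_
    simp [combine, hi]
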